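/- arXiv:2510.03053 — 2 statements merged into one kernel-verified Lean document; each statement's English description precedes it below -/
import Mathlib

section
/- For every real x ≥ 0, the standard normal tail satisfies (1/(√(2π)(1+x))) · exp(-x²/2) ≤ 1 - Φ(x) ≤ (1/(√π (1+x))) · exp(-x²/2), where Φ is the standard normal CDF. -/
open Real MeasureTheory

/-- The standard normal cumulative distribution function. -/
noncomputable def stdNormalCDF (x : ℝ) : ℝ :=
  ∫ t in Set.Iic x, (Real.sqrt (2 * Real.pi))⁻¹ * Real.exp (-t ^ 2 / 2)

lemma phi_integrable : Integrable (fun t : ℝ => (Real.sqrt (2 * Real.pi))⁻¹ * Real.exp (-t ^ 2 / 2)) := by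
  have h : Integrable (fun t : ℝ => Real.exp (-(1/2 : ℝ) * t ^ 2)) := integrable_exp_neg_mul_sq (by norm_num)
  have := h.const_mul (Real.sqrt (2 * Real.pi))⁻¹
  convert this using 2 with t
  ring_nf

lemma phi_total : ∫ t : ℝ, (Real.sqrt (2 * Real.pi))⁻¹ * Real.exp (-t ^ 2 / 2) = 1 := by
  have h : ∫ t : ℝ, Real.exp (-(1/2 : ℝ) * t ^ 2) = Real.sqrt (π / (1/2)) := integral_gaussian (1/2)
  have h2 : ∫ t : ℝ, (Real.sqrt (2 * Real.pi))⁻¹ * Real.exp (-t ^ 2 / 2)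
      = (Real.sqrt (2 * Real.pi))⁻¹ * ∫ t : ℝ, Real.exp (-(1/2 : ℝ) * t ^ 2) := by
    rw [← integral_const_mul]
    congr 1 with t
    ring_nf
  rw [h2, h]
  rw [show π / (1/2) = 2 * π by ring]
  rw [inv_mul_cancel₀]
  positivity

lemma tail_eq (x : ℝ) :
    1 - stdNormalCDF x = ∫ t in Set.Ioi x, (Real.sqrt (2 * Real.pi))⁻¹ * Real.exp (-t ^ 2 / 2) := by
  have := intervalIntegral.integral_Iic_add_Ioi (b := x) (phi_integrable.integrableOn) (phi_integrable.integrableOn)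
  rw [phi_total] at this
  unfold stdNormalCDF
  linarith

-- derivative lemma
lemma deriv_aux (c : ℝ) (t : ℝ) (ht : (0:ℝ) < 1 + t) :
    HasDerivAt (fun t : ℝ => -(c * Real.exp (-t ^ 2 / 2) / (1 + t)))
      (c * Real.exp (-t ^ 2 / 2) * (t ^ 2 + t + 1) / (1 + t) ^ 2) t := by
  have h1 : HasDerivAt (fun t : ℝ => -t ^ 2 / 2) (-t) t := by
    have h := (hasDerivAt_pow 2 t).neg.div_const 2
    refine h.congr_deriv ?_
    push_cast
    ring
  have h2 : HasDerivAt (fun t : ℝ => Real.exp (-t ^ 2 / 2)) (Real.exp (-t ^ 2 / 2) * (-t)) t := h1.exp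
  have h3 : HasDerivAt (fun t : ℝ => (1 : ℝ) + t) 1 t := by
    simpa using (hasDerivAt_id t).const_add 1
  have h4 := ((h2.const_mul c).div h3 (ne_of_gt ht)).neg
  refine h4.congr_deriv ?_
  field_simp
  ring

lemma tendsto_aux (c : ℝ) :
    Filter.Tendsto (fun t : ℝ => -(c * Real.exp (-t ^ 2 / 2) / (1 + t))) Filter.atTop (nhds 0) := by
  have h1 : Filter.Tendsto (fun t : ℝ => Real.exp (-t ^ 2 / 2)) Filter.atTop (nhds 0) := by
    apply Real.tendsto_exp_atBot.comp
    apply Filter.Tendsto.atBot_div_const (by norm_num)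
    apply Filter.tendsto_neg_atBot_iff.mpr
    exact Filter.tendsto_pow_atTop (by norm_num)
  have h2 : Filter.Tendsto (fun t : ℝ => (1 + t)⁻¹) Filter.atTop (nhds 0) := by
    apply Filter.Tendsto.inv_tendsto_atTop
    exact Filter.tendsto_atTop_add_const_left _ 1 Filter.tendsto_id
  have := ((h1.const_mul c).mul h2).neg
  simp only [mul_zero, neg_zero] at this
  simpa [div_eq_mul_inv, mul_assoc] using this

lemma Fprime_integrable (x : ℝ) (hx : 0 ≤ x) (c : ℝ) (hc : 0 ≤ c) :
    IntegrableOn (fun t : ℝ => c * Real.exp (-t ^ 2 / 2) * (t ^ 2 + t + 1) / (1 + t) ^ 2)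
      (Set.Ioi x) := by
  have hφ : IntegrableOn (fun t : ℝ => c * Real.exp (-t ^ 2 / 2)) (Set.Ioi x) := by
    have h : Integrable (fun t : ℝ => Real.exp (-(1/2 : ℝ) * t ^ 2)) := integrable_exp_neg_mul_sq (by norm_num)
    have := (h.const_mul c).integrableOn (s := Set.Ioi x)
    convert this using 2 with t
    ring_nf
  apply MeasureTheory.Integrable.mono hφ
  · apply ContinuousOn.aestronglyMeasurable _ measurableSet_Ioi
    apply ContinuousOn.div
    · exact ((continuous_const.mul (by continuity)).mul (by continuity)).continuousOn
    · exact ((continuous_const.add continuous_id).pow 2).continuousOn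
    · intro t ht
      have : 0 < 1 + t := by simp at ht; linarith
      positivity
  · filter_upwards [ae_restrict_mem measurableSet_Ioi] with t ht
    simp only [Set.mem_Ioi] at ht
    have ht0 : 0 < 1 + t := by linarith
    have hnum : 0 ≤ t ^ 2 + t + 1 := by nlinarith
    have hkey : (t ^ 2 + t + 1) / (1 + t) ^ 2 ≤ 1 := by
      rw [div_le_one (by positivity)]
      nlinarith
    rw [Real.norm_eq_abs, Real.norm_eq_abs, abs_of_nonneg (by positivity), abs_of_nonneg (by positivity)]
    rw [div_le_iff₀ (by positivity)] at hkey ⊢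
    nlinarith [Real.exp_pos (-t^2/2), mul_nonneg hc (Real.exp_pos (-t^2/2)).le]

lemma Fprime_integral (x : ℝ) (hx : 0 ≤ x) (c : ℝ) (hc : 0 ≤ c) :
    ∫ t in Set.Ioi x, c * Real.exp (-t ^ 2 / 2) * (t ^ 2 + t + 1) / (1 + t) ^ 2
      = c * Real.exp (-x ^ 2 / 2) / (1 + x) := by
  have hcont : ContinuousWithinAt (fun t : ℝ => -(c * Real.exp (-t ^ 2 / 2) / (1 + t))) (Set.Ici x) x := by
    apply ContinuousAt.continuousWithinAt
    have : (0:ℝ) < 1 + x := by linarith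
    exact (((continuous_const.mul (by continuity)).continuousAt).div
      ((continuous_const.add continuous_id).continuousAt) (ne_of_gt this)).neg
  have hres := integral_Ioi_of_hasDerivAt_of_tendsto hcont
    (fun t ht => deriv_aux c t (by simp at ht; linarith)) (Fprime_integrable x hx c hc) (tendsto_aux c)
  rw [hres]
  ring

/-- Two-sided Gaussian tail bound: for `x ≥ 0`,
`(1/(√(2π)(1+x))) e^{-x²/2} ≤ 1 - Φ(x) ≤ (1/(√π (1+x))) e^{-x²/2}`. -/
theorem stmt0 (x : ℝ) (hx : 0 ≤ x) :
    (Real.sqrt (2 * Real.pi) * (1 + x))⁻¹ * Real.exp (-x ^ 2 / 2) ≤ 1 - stdNormalCDF x ∧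
    1 - stdNormalCDF x ≤ (Real.sqrt Real.pi * (1 + x))⁻¹ * Real.exp (-x ^ 2 / 2) := by
  set c : ℝ := (Real.sqrt (2 * Real.pi))⁻¹ with hc_def
  have hc : 0 ≤ c := by positivity
  have hs2 : Real.sqrt 2 ^ 2 = 2 := Real.sq_sqrt (by norm_num)
  have hs2nn : 0 ≤ Real.sqrt 2 := Real.sqrt_nonneg 2
  rw [tail_eq]
  constructor
  · -- lower bound
    have e1 : (Real.sqrt (2 * Real.pi) * (1 + x))⁻¹ * Real.exp (-x ^ 2 / 2)
        = c * Real.exp (-x ^ 2 / 2) / (1 + x) := by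
      rw [mul_inv, div_eq_mul_inv]; ring
    rw [e1, ← Fprime_integral x hx c hc]
    apply setIntegral_mono_on (Fprime_integrable x hx c hc)
      (phi_integrable.integrableOn) measurableSet_Ioi
    intro t ht
    simp only [Set.mem_Ioi] at ht
    have ht0 : 0 < 1 + t := by linarith
    have hkey : (t ^ 2 + t + 1) / (1 + t) ^ 2 ≤ 1 := by
      rw [div_le_one (by positivity)]; nlinarith
    have hE : 0 < Real.exp (-t ^ 2 / 2) := Real.exp_pos _
    calc c * Real.exp (-t ^ 2 / 2) * (t ^ 2 + t + 1) / (1 + t) ^ 2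
        = c * Real.exp (-t ^ 2 / 2) * ((t ^ 2 + t + 1) / (1 + t) ^ 2) := by ring
      _ ≤ c * Real.exp (-t ^ 2 / 2) * 1 := by
          apply mul_le_mul_of_nonneg_left hkey (by positivity)
      _ = c * Real.exp (-t ^ 2 / 2) := by ring
  · -- upper bound
    have hc2 : (0:ℝ) ≤ Real.sqrt 2 * c := by positivity
    have e2 : (Real.sqrt Real.pi * (1 + x))⁻¹ * Real.exp (-x ^ 2 / 2)
        = (Real.sqrt 2 * c) * Real.exp (-x ^ 2 / 2) / (1 + x) := by
      have hsplit : Real.sqrt (2 * Real.pi) = Real.sqrt 2 * Real.sqrt Real.pi :=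
        Real.sqrt_mul (by norm_num) _
      have hπ : (0:ℝ) < Real.sqrt Real.pi := Real.sqrt_pos.mpr Real.pi_pos
      have hs2pos : (0:ℝ) < Real.sqrt 2 := by nlinarith
      rw [hc_def, hsplit, mul_inv, mul_inv, div_eq_mul_inv]
      field_simp
    rw [e2, ← Fprime_integral x hx (Real.sqrt 2 * c) hc2]
    apply setIntegral_mono_on (phi_integrable.integrableOn)
      (Fprime_integrable x hx (Real.sqrt 2 * c) hc2) measurableSet_Ioi
    intro t ht
    simp only [Set.mem_Ioi] at ht
    have ht0 : 0 < 1 + t := by linarith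
    have ht0' : 0 ≤ t := by linarith
    have hkey : (1 + t) ^ 2 ≤ Real.sqrt 2 * (t ^ 2 + t + 1) := by
      nlinarith [sq_nonneg (t - 1), sq_nonneg (3 * Real.sqrt 2 - 4)]
    have hE : 0 < Real.exp (-t ^ 2 / 2) := Real.exp_pos _
    have h1 : 1 ≤ Real.sqrt 2 * ((t ^ 2 + t + 1) / (1 + t) ^ 2) := by
      rw [mul_div_assoc', le_div_iff₀ (by positivity)]
      linarith
    calc c * Real.exp (-t ^ 2 / 2)
        = c * Real.exp (-t ^ 2 / 2) * 1 := by ring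
      _ ≤ c * Real.exp (-t ^ 2 / 2) * (Real.sqrt 2 * ((t ^ 2 + t + 1) / (1 + t) ^ 2)) := by
          apply mul_le_mul_of_nonneg_left h1 (by positivity)
      _ = Real.sqrt 2 * c * Real.exp (-t ^ 2 / 2) * (t ^ 2 + t + 1) / (1 + t) ^ 2 := by ring
end

section
/- For all real x ≥ y ≥ 0, (1 - Φ(x - y))/(1 - Φ(x)) ≤ 2(1 + x) · exp(xy - y²/2), where Φ is the standard normal CDF. -/
open Real MeasureTheory Set Filter

noncomputable def gaussTail (u : ℝ) : ℝ := ∫ t in Set.Ioi u, Real.exp (-t ^ 2 / 2)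

lemma gauss_integrable : Integrable (fun t : ℝ => Real.exp (-t ^ 2 / 2)) := by
  have h := integrable_exp_neg_mul_sq (by norm_num : (0:ℝ) < 1/2)
  refine h.congr (Filter.Eventually.of_forall fun t => ?_)
  ring_nf

lemma gauss_total : ∫ t : ℝ, Real.exp (-t ^ 2 / 2) = Real.sqrt (2 * Real.pi) := by
  have h := integral_gaussian (1/2)
  rw [show π / (1/2) = 2 * π by ring] at h
  rw [← h]
  congr 1; ext t; ring_nf

lemma gaussTail_eq (u : ℝ) :
    gaussTail u = gaussTail 0 - ∫ t in (0:ℝ)..u, Real.exp (-t ^ 2 / 2) := by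
  have hi := gauss_integrable
  have h1 := intervalIntegral.integral_Iic_add_Ioi (hi.integrableOn (s := Iic u)) (hi.integrableOn (s := Ioi u))
  have h2 := intervalIntegral.integral_Iic_add_Ioi (hi.integrableOn (s := Iic 0)) (hi.integrableOn (s := Ioi 0))
  have h3 := intervalIntegral.integral_Iic_sub_Iic (hi.integrableOn (s := Iic 0)) (hi.integrableOn (s := Iic u))
  simp only [gaussTail]
  linarith

lemma gaussExp_hasDerivAt (v : ℝ) :
    HasDerivAt (fun w : ℝ => Real.exp (-w ^ 2 / 2)) (Real.exp (-v ^ 2 / 2) * (-v)) v := by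
  have h1 : HasDerivAt (fun w : ℝ => -w ^ 2 / 2) (-v) v := by
    have := ((hasDerivAt_pow 2 v).neg.div_const 2)
    refine this.congr_deriv ?_
    simp; ring
  exact h1.exp

lemma gaussTail_hasDerivAt (u : ℝ) :
    HasDerivAt gaussTail (-(Real.exp (-u ^ 2 / 2))) u := by
  have hd : HasDerivAt (fun v => ∫ t in (0:ℝ)..v, Real.exp (-t ^ 2 / 2))
      (Real.exp (-u ^ 2 / 2)) u := by
    refine intervalIntegral.integral_hasDerivAt_right
      (gauss_integrable.intervalIntegrable)
      (gauss_integrable.1.stronglyMeasurableAtFilter) ?_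
    exact (Real.continuous_exp.comp (by continuity)).continuousAt
  have h2 : HasDerivAt (fun v => gaussTail 0 - ∫ t in (0:ℝ)..v, Real.exp (-t ^ 2 / 2))
      (-(Real.exp (-u ^ 2 / 2))) u := hd.const_sub _
  exact h2.congr_of_eventuallyEq (Filter.Eventually.of_forall fun v => (gaussTail_eq v))

lemma gaussTail_tendsto : Tendsto gaussTail atTop (nhds 0) := by
  have h := intervalIntegral_tendsto_integral_Ioi 0
    (gauss_integrable.integrableOn (s := Ioi 0)) (tendsto_id (α := ℝ))
  have h2 : Tendsto (fun u => gaussTail 0 - ∫ t in (0:ℝ)..u, Real.exp (-t ^ 2 / 2)) atTop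
      (nhds (gaussTail 0 - gaussTail 0)) := tendsto_const_nhds.sub h
  simp only [sub_self] at h2
  exact h2.congr (fun u => (gaussTail_eq u).symm)

lemma bound_tendsto (c : ℝ) :
    Tendsto (fun v : ℝ => c / (1 + v) * Real.exp (-v ^ 2 / 2)) atTop (nhds 0) := by
  have h1 : Tendsto (fun v : ℝ => c / (1 + v)) atTop (nhds 0) :=
    Tendsto.div_atTop tendsto_const_nhds (tendsto_atTop_add_const_left _ _ tendsto_id)
  have h2 : Tendsto (fun v : ℝ => Real.exp (-v ^ 2 / 2)) atTop (nhds 0) := by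
    apply Real.tendsto_exp_atBot.comp
    have h3 : Tendsto (fun v : ℝ => v ^ 2) atTop atTop :=
      tendsto_pow_atTop (n := 2) (by norm_num)
    have h4 : Tendsto (fun v : ℝ => -v ^ 2) atTop atBot := tendsto_neg_atTop_atBot.comp h3
    exact h4.atBot_div_const (by norm_num)
  simpa using h1.mul h2

lemma sqrt2_ge : (4:ℝ)/3 ≤ Real.sqrt 2 := by
  have h : Real.sqrt 2 * Real.sqrt 2 = 2 := Real.mul_self_sqrt (by norm_num)
  nlinarith [Real.sqrt_nonneg 2]

lemma frac_hasDerivAt (c v : ℝ) (hv : (1:ℝ) + v ≠ 0) :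
    HasDerivAt (fun w : ℝ => c / (1 + w)) (-c / (1 + v) ^ 2) v := by
  have h := (hasDerivAt_const v c).div ((hasDerivAt_id v).const_add 1) hv
  refine h.congr_deriv ?_
  simp [neg_div]

/-- upper bound: for `u ≥ 0`, `gaussTail u ≤ √2 / (1+u) * exp (-u²/2)` -/
lemma gaussTail_upper {u : ℝ} (hu : 0 ≤ u) :
    gaussTail u ≤ Real.sqrt 2 / (1 + u) * Real.exp (-u ^ 2 / 2) := by
  set h : ℝ → ℝ := fun v => Real.sqrt 2 / (1 + v) * Real.exp (-v ^ 2 / 2) - gaussTail v with hh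
  have hderiv : ∀ v : ℝ, 0 ≤ v → HasDerivAt h
      ((-Real.sqrt 2 / (1 + v) ^ 2) * Real.exp (-v ^ 2 / 2)
        + Real.sqrt 2 / (1 + v) * (Real.exp (-v ^ 2 / 2) * (-v)) + Real.exp (-v ^ 2 / 2)) v := by
    intro v hv
    have h1v : (1:ℝ) + v ≠ 0 := by positivity
    have := ((frac_hasDerivAt (Real.sqrt 2) v h1v).mul (gaussExp_hasDerivAt v)).sub
      (gaussTail_hasDerivAt v)
    refine this.congr_deriv ?_
    ring
  have hnonpos : ∀ v : ℝ, 0 ≤ v →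
      (-Real.sqrt 2 / (1 + v) ^ 2) * Real.exp (-v ^ 2 / 2)
        + Real.sqrt 2 / (1 + v) * (Real.exp (-v ^ 2 / 2) * (-v)) + Real.exp (-v ^ 2 / 2) ≤ 0 := by
    intro v hv
    have h1v : (0:ℝ) < 1 + v := by positivity
    have he : (0:ℝ) < Real.exp (-v ^ 2 / 2) := Real.exp_pos _
    have key : (1 + v) ^ 2 ≤ Real.sqrt 2 * (1 + v + v ^ 2) := by
      nlinarith [sqrt2_ge, sq_nonneg (1 - v), sq_nonneg v]
    rw [div_mul_eq_mul_div, div_mul_eq_mul_div, div_add_div _ _ (by positivity : ((1:ℝ)+v)^2 ≠ 0) (ne_of_gt h1v), div_add' _ _ _ (by positivity : ((1:ℝ)+v)^2 * (1+v) ≠ 0)]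
    apply div_nonpos_of_nonpos_of_nonneg _ (by positivity)
    nlinarith [mul_pos h1v he, mul_pos (mul_pos h1v h1v) he]
  have hanti : AntitoneOn h (Ici 0) := by
    refine antitoneOn_of_deriv_nonpos (convex_Ici 0) ?_ ?_ ?_
    · intro v hv
      exact (hderiv v hv).continuousAt.continuousWithinAt
    · intro v hv
      rw [interior_Ici] at hv
      exact ((hderiv v (le_of_lt hv)).differentiableAt).differentiableWithinAt
    · intro v hv
      rw [interior_Ici] at hv
      rw [(hderiv v (le_of_lt hv)).deriv]
      exact hnonpos v (le_of_lt hv)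
  have hlim : Tendsto h atTop (nhds 0) := by
    have := (bound_tendsto (Real.sqrt 2)).sub gaussTail_tendsto
    rw [sub_zero] at this
    exact this.congr (fun v => by rw [hh])
  have : (0:ℝ) ≤ h u := by
    refine le_of_tendsto hlim ?_
    filter_upwards [eventually_ge_atTop u] with v hv
    exact hanti hu (le_trans hu hv) hv
  simpa [hh] using this

/-- lower bound: for `u ≥ 0`, `exp (-u²/2) / (1+u) ≤ gaussTail u` -/
lemma gaussTail_lower {u : ℝ} (hu : 0 ≤ u) :
    Real.exp (-u ^ 2 / 2) / (1 + u) ≤ gaussTail u := by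
  set h : ℝ → ℝ := fun v => gaussTail v - 1 / (1 + v) * Real.exp (-v ^ 2 / 2) with hh
  have hderiv : ∀ v : ℝ, 0 ≤ v → HasDerivAt h
      (-(Real.exp (-v ^ 2 / 2)) - ((-1 / (1 + v) ^ 2) * Real.exp (-v ^ 2 / 2)
        + 1 / (1 + v) * (Real.exp (-v ^ 2 / 2) * (-v)))) v := by
    intro v hv
    have h1v : (1:ℝ) + v ≠ 0 := by positivity
    have h2 := (gaussTail_hasDerivAt v).sub
      ((frac_hasDerivAt 1 v h1v).mul (gaussExp_hasDerivAt v))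
    exact h2
  have hnonpos : ∀ v : ℝ, 0 ≤ v →
      -(Real.exp (-v ^ 2 / 2)) - ((-1 / (1 + v) ^ 2) * Real.exp (-v ^ 2 / 2)
        + 1 / (1 + v) * (Real.exp (-v ^ 2 / 2) * (-v))) ≤ 0 := by
    intro v hv
    have h1v : (0:ℝ) < 1 + v := by positivity
    have he : (0:ℝ) < Real.exp (-v ^ 2 / 2) := Real.exp_pos _
    have key : -(Real.exp (-v ^ 2 / 2)) - ((-1 / (1 + v) ^ 2) * Real.exp (-v ^ 2 / 2)
        + 1 / (1 + v) * (Real.exp (-v ^ 2 / 2) * (-v)))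
        = Real.exp (-v ^ 2 / 2) * (-v) / (1 + v) ^ 2 := by
      field_simp
      ring
    rw [key]
    apply div_nonpos_of_nonpos_of_nonneg _ (by positivity)
    exact mul_nonpos_of_nonneg_of_nonpos he.le (by linarith)
  have hanti : AntitoneOn h (Ici 0) := by
    refine antitoneOn_of_deriv_nonpos (convex_Ici 0) ?_ ?_ ?_
    · intro v hv
      exact (hderiv v hv).continuousAt.continuousWithinAt
    · intro v hv
      rw [interior_Ici] at hv
      exact ((hderiv v (le_of_lt hv)).differentiableAt).differentiableWithinAt
    · intro v hv
      rw [interior_Ici] at hv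
      rw [(hderiv v (le_of_lt hv)).deriv]
      exact hnonpos v (le_of_lt hv)
  have hlim : Tendsto h atTop (nhds 0) := by
    have := gaussTail_tendsto.sub (bound_tendsto 1)
    rw [sub_zero] at this
    exact this.congr (fun v => by rw [hh])
  have : (0:ℝ) ≤ h u := by
    refine le_of_tendsto hlim ?_
    filter_upwards [eventually_ge_atTop u] with v hv
    exact hanti hu (le_trans hu hv) hv
  have := this
  simp only [hh, sub_nonneg] at this
  calc Real.exp (-u ^ 2 / 2) / (1 + u) = 1 / (1 + u) * Real.exp (-u ^ 2 / 2) := by ring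
    _ ≤ gaussTail u := this

lemma one_sub_cdf (z : ℝ) :
    1 - stdNormalCDF z = (Real.sqrt (2 * Real.pi))⁻¹ * gaussTail z := by
  have hi := gauss_integrable
  have h1 := intervalIntegral.integral_Iic_add_Ioi (hi.integrableOn (s := Iic z)) (hi.integrableOn (s := Ioi z))
  rw [gauss_total] at h1
  have hs : (0:ℝ) < Real.sqrt (2 * π) := Real.sqrt_pos.2 (by positivity)
  have : stdNormalCDF z
      = (Real.sqrt (2 * π))⁻¹ * ∫ t in Set.Iic z, Real.exp (-t ^ 2 / 2) := by
    rw [stdNormalCDF, MeasureTheory.integral_const_mul]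
  rw [this]
  have hinv : (Real.sqrt (2 * π))⁻¹ * Real.sqrt (2 * π) = 1 := inv_mul_cancel₀ hs.ne'
  have h1' : (∫ t in Set.Iic z, Real.exp (-t ^ 2 / 2)) + gaussTail z = Real.sqrt (2 * π) := by
    rw [gaussTail]; exact h1
  have hB : gaussTail z = Real.sqrt (2 * π) - ∫ t in Set.Iic z, Real.exp (-t ^ 2 / 2) := by
    linarith
  rw [hB, mul_sub, hinv]

/-- For `x ≥ y ≥ 0`, `(1 - Φ(x-y))/(1 - Φ(x)) ≤ 2(1+x) exp(xy - y²/2)`. -/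
theorem stmt11 (x y : ℝ) (hy : 0 ≤ y) (hxy : y ≤ x) :
    (1 - stdNormalCDF (x - y)) / (1 - stdNormalCDF x) ≤
      2 * (1 + x) * Real.exp (x * y - y ^ 2 / 2) := by
  have hx : 0 ≤ x := le_trans hy hxy
  have hxy0 : 0 ≤ x - y := by linarith
  have hs : (0:ℝ) < (Real.sqrt (2 * π))⁻¹ := by
    exact inv_pos.2 (Real.sqrt_pos.2 (by positivity))
  rw [one_sub_cdf, one_sub_cdf, mul_div_mul_left _ _ hs.ne']
  have hTx : Real.exp (-x ^ 2 / 2) / (1 + x) ≤ gaussTail x := gaussTail_lower hx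
  have hTxpos : 0 < gaussTail x :=
    lt_of_lt_of_le (by positivity) hTx
  rw [div_le_iff₀ hTxpos]
  have hup : gaussTail (x - y) ≤ Real.sqrt 2 / (1 + (x - y)) * Real.exp (-(x - y) ^ 2 / 2) :=
    gaussTail_upper hxy0
  have hsqrt2 : Real.sqrt 2 ≤ 2 := by
    nlinarith [Real.mul_self_sqrt (show (0:ℝ) ≤ 2 by norm_num), Real.sqrt_nonneg 2]
  have h1 : Real.sqrt 2 / (1 + (x - y)) ≤ 2 := by
    rw [div_le_iff₀ (by linarith : (0:ℝ) < 1 + (x - y))]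
    nlinarith
  have step1 : gaussTail (x - y) ≤ 2 * Real.exp (-(x - y) ^ 2 / 2) := by
    calc gaussTail (x - y) ≤ Real.sqrt 2 / (1 + (x - y)) * Real.exp (-(x - y) ^ 2 / 2) := hup
      _ ≤ 2 * Real.exp (-(x - y) ^ 2 / 2) := by
          apply mul_le_mul_of_nonneg_right h1 (Real.exp_pos _).le
  have step2 : 2 * Real.exp (-(x - y) ^ 2 / 2)
      ≤ 2 * (1 + x) * Real.exp (x * y - y ^ 2 / 2) * gaussTail x := by
    calc 2 * (1 + x) * Real.exp (x * y - y ^ 2 / 2) * gaussTail x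
        ≥ 2 * (1 + x) * Real.exp (x * y - y ^ 2 / 2) * (Real.exp (-x ^ 2 / 2) / (1 + x)) := by
          apply mul_le_mul_of_nonneg_left hTx (by positivity)
      _ = 2 * (Real.exp (x * y - y ^ 2 / 2) * Real.exp (-x ^ 2 / 2)) := by
          field_simp
      _ = 2 * Real.exp (-(x - y) ^ 2 / 2) := by
          rw [← Real.exp_add]; ring_nf
  linarith
end
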